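/- Let Δ be a finite simplicial complex on [n] with at least one nonempty face. For T a nonempty face of Δ, let f(T) ≥ 1 be the number of facets (inclusion-maximal faces) of Δ containing T. Then for every nonempty face T ∈ Δ̄ and every S ⊆ [n], Σ_{(H,F) ∈ E(Δ) with T ⊆ H} (1/f(T)) · u^S_{(H,F)} = 1 if T ⊆ S and = 0 otherwise. (That is, the linear map Ω_Δ with entries (Ω_Δ)^{(H,F)}_T = 1/f(T) when T ⊆ H and 0 otherwise sends each vertex u^S of the binary marginal polytope Marg(Δ) to the vertex v^S of the correlation polytope Corr(Δ).) -/

import Mathlib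

open Finset

/-- `F` is a facet (inclusion-maximal face) of `Δ`. -/
def IsFacet {n : ℕ} (Δ : Finset (Finset (Fin n))) (F : Finset (Fin n)) : Prop :=
  F ∈ Δ ∧ ∀ G ∈ Δ, F ⊆ G → F = G

instance {n : ℕ} (Δ : Finset (Finset (Fin n))) : DecidablePred (IsFacet Δ) := fun F => by
  unfold IsFacet; infer_instance

/-- The index set `E(Δ) = {(H, F) : H ⊆ F ∈ facets(Δ)}`. -/
abbrev EIdx {n : ℕ} (Δ : Finset (Finset (Fin n))) : Type :=
  {p : Finset (Fin n) × Finset (Fin n) // p.1 ⊆ p.2 ∧ IsFacet Δ p.2}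

/-- The vertex `u^S` of the binary marginal polytope:
`u^S_{(H,F)} = 1` if `S ∩ F = H`, `0` otherwise. -/
noncomputable def uvec {n : ℕ} (Δ : Finset (Finset (Fin n))) (S : Finset (Fin n)) :
    EIdx Δ → ℝ :=
  fun p => if S ∩ p.val.2 = p.val.1 then 1 else 0

/-- `f(T)`: the number of facets of `Δ` containing `T`. -/
def numFacets {n : ℕ} (Δ : Finset (Finset (Fin n))) (T : Finset (Fin n)) : ℕ :=
  (Δ.filter (fun F => IsFacet Δ F ∧ T ⊆ F)).card

/-- for every nonempty face `T ∈ Δ̄` one has `f(T) ≥ 1`, and for every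
`S ⊆ [n]`, `Σ_{(H,F) ∈ E(Δ), T ⊆ H} (1/f(T)) · u^S_{(H,F)} = 1` if `T ⊆ S` and `0`
otherwise; i.e. the map `Ω_Δ` sends each vertex `u^S` of `Marg(Δ)` to the vertex `v^S`
of `Corr(Δ)`. -/
theorem stmt_19 {n : ℕ} (Δ : Finset (Finset (Fin n)))
    (hΔ : ∀ F ∈ Δ, ∀ G, G ⊆ F → G ∈ Δ)
    (T : Finset (Fin n)) (hT : T ∈ Δ) (hTne : T.Nonempty) (S : Finset (Fin n)) :
    1 ≤ numFacets Δ T ∧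
    ∑ p : EIdx Δ,
        (if T ⊆ p.val.1 then (1 : ℝ) / (numFacets Δ T) else 0) * uvec Δ S p =
      if T ⊆ S then 1 else 0 := by
  have hfac : ∃ F, IsFacet Δ F ∧ T ⊆ F := by
    obtain ⟨F, hF, hmax⟩ : ∃ F ∈ Δ.filter (fun G => T ⊆ G), ∀ x ∈ Δ.filter (fun G => T ⊆ G), ¬ F < x := by
      obtain ⟨F, hF, hm⟩ := Finset.exists_maximal (s := Δ.filter (fun G => T ⊆ G))
        ⟨T, by simp [hT]⟩
      exact ⟨F, hF, fun x hx hlt => lt_irrefl _ (lt_of_lt_of_le hlt (hm hx hlt.le))⟩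
    simp only [mem_filter] at hF
    refine ⟨F, ⟨hF.1, ?_⟩, hF.2⟩
    intro G hG hFG
    by_contra hne
    exact hmax G (mem_filter.mpr ⟨hG, hF.2.trans hFG⟩) (lt_of_le_of_ne hFG hne)
  have hcard : 1 ≤ numFacets Δ T := by
    obtain ⟨F, hF, hTF⟩ := hfac
    exact card_pos.mpr ⟨F, mem_filter.mpr ⟨hF.1, hF, hTF⟩⟩
  refine ⟨hcard, ?_⟩
  have hfne : (numFacets Δ T : ℝ) ≠ 0 := Nat.cast_ne_zero.mpr (by omega)
  have hsub : ∑ p : EIdx Δ,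
      (if T ⊆ p.val.1 then (1 : ℝ) / (numFacets Δ T) else 0) * uvec Δ S p
      = ∑ p ∈ Finset.univ.filter
          (fun p : Finset (Fin n) × Finset (Fin n) => p.1 ⊆ p.2 ∧ IsFacet Δ p.2),
        (if T ⊆ p.1 then (1 : ℝ) / (numFacets Δ T) else 0) *
          (if S ∩ p.2 = p.1 then 1 else 0) := by
    rw [Finset.sum_subtype (p := fun p : Finset (Fin n) × Finset (Fin n) =>
          p.1 ⊆ p.2 ∧ IsFacet Δ p.2)
        (Finset.univ.filter
          (fun p : Finset (Fin n) × Finset (Fin n) => p.1 ⊆ p.2 ∧ IsFacet Δ p.2))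
        (by simp) (fun p => (if T ⊆ p.1 then (1 : ℝ) / (numFacets Δ T) else 0) *
          (if S ∩ p.2 = p.1 then 1 else 0))]
    rfl
  rw [hsub]
  by_cases hTS : T ⊆ S
  · rw [if_pos hTS]
    rw [← Finset.sum_filter_of_ne (p := fun p : Finset (Fin n) × Finset (Fin n) => S ∩ p.2 = p.1)
        (by intro p hp hne; by_contra h; simp [h] at hne)]
    rw [Finset.sum_nbij' (i := fun p : Finset (Fin n) × Finset (Fin n) => p.2)
        (j := fun F => (S ∩ F, F))
        (t := Δ.filter (fun F => IsFacet Δ F))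
        (g := fun F => if T ⊆ S ∩ F then (1:ℝ)/(numFacets Δ T) else 0)
        ?_ ?_ ?_ ?_ ?_]
    · rw [← Finset.sum_filter]
      have heq : (Δ.filter (fun F => IsFacet Δ F)).filter (fun F => T ⊆ S ∩ F)
          = Δ.filter (fun F => IsFacet Δ F ∧ T ⊆ F) := by
        rw [Finset.filter_filter]
        apply Finset.filter_congr
        intro F _
        constructor
        · rintro ⟨h1, h2⟩; exact ⟨h1, h2.trans inter_subset_right⟩
        · rintro ⟨h1, h2⟩; exact ⟨h1, subset_inter hTS h2⟩
      rw [heq, Finset.sum_const]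
      have : (Δ.filter (fun F => IsFacet Δ F ∧ T ⊆ F)).card = numFacets Δ T := rfl
      rw [this, nsmul_eq_mul, mul_one_div, div_self hfne]
    · intro p hp
      simp only [mem_filter, Finset.mem_univ, true_and] at hp ⊢
      exact ⟨hp.1.2.1, hp.1.2⟩
    · intro F hF
      simp only [mem_filter, Finset.mem_univ, true_and] at hF ⊢
      exact ⟨⟨Finset.inter_subset_right, hF.2⟩, trivial⟩
    · intro p hp
      simp only [mem_filter, Finset.mem_univ, true_and] at hp
      exact Prod.ext hp.2 rfl
    · intro F hF; rfl
    · intro p hp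
      simp only [mem_filter, Finset.mem_univ, true_and] at hp
      rw [← hp.2]
      simp
  · rw [if_neg hTS]
    apply Finset.sum_eq_zero
    intro p hp
    by_cases h1 : T ⊆ p.1
    · by_cases h2 : S ∩ p.2 = p.1
      · exfalso
        rw [← h2] at h1
        exact hTS (h1.trans inter_subset_left)
      · simp [h2]
    · simp [h1]
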